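/- arXiv:2106.06854 — 2 statements merged into one kernel-verified Lean document; each statement's English description precedes it below -/
import Mathlib

section
/- Least-squares characterization (Theorem 3): if the successor representation is exact in the sense that (1−γ)·(1/|D₀|)·𝟏ᵀΨ = (1/|D|)·𝟏ᵀ·diag(d^π/d^D)·Φ, then the optimizer w* = (1−γ)·(|D|/|D₀|)·(ΦᵀΦ)⁻¹Ψᵀ𝟏 equals the least-squares estimator (ΦᵀΦ)⁻¹Φᵀ·(d^π/d^D), i.e. the minimizer of Σ_i (wᵀφ_i − (d^π/d^D)_i)². -/
open Matrix

/-- Least-squares characterization (Theorem 3): if the successor representation is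
exact, i.e. `(1−γ)·(1/|D₀|)·𝟏ᵀΨ = (1/|D|)·𝟏ᵀ·diag(ρ)·Φ` with `ρ = d^π/d^D`, then
`w* = (1−γ)·(|D|/|D₀|)·(ΦᵀΦ)⁻¹Ψᵀ𝟏` equals the least-squares estimator
`(ΦᵀΦ)⁻¹Φᵀρ`, the minimizer of `Σ_i (wᵀφ_i − ρ_i)²`. -/
theorem stmt_13 {n m F : ℕ}
    (Φ : Matrix (Fin n) (Fin F) ℝ) (Ψ : Matrix (Fin m) (Fin F) ℝ)
    (ρ : Fin n → ℝ) (hn : 0 < n) (m₀ : ℝ) (hm₀ : 0 < m₀)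
    (γ : ℝ) (hγ0 : 0 ≤ γ) (hγ1 : γ < 1)
    (hinv : IsUnit (Φᵀ * Φ).det)
    (hSR : ((1 - γ) * (1 / m₀)) • Matrix.vecMul (1 : Fin m → ℝ) Ψ
      = (1 / (n : ℝ)) • Matrix.vecMul (1 : Fin n → ℝ) (Matrix.diagonal ρ * Φ))
    (wstar : Fin F → ℝ)
    (hwstar : wstar = ((1 - γ) * ((n : ℝ) / m₀)) •
      (Φᵀ * Φ)⁻¹.mulVec (Ψᵀ.mulVec (1 : Fin m → ℝ))) :
    wstar = (Φᵀ * Φ)⁻¹.mulVec (Φᵀ.mulVec ρ) ∧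
    (∀ w : Fin F → ℝ,
      ∑ i, (wstar ⬝ᵥ (fun j => Φ i j) - ρ i)^2 ≤ ∑ i, (w ⬝ᵥ (fun j => Φ i j) - ρ i)^2) := by
  have hne : (n : ℝ) ≠ 0 := Nat.cast_ne_zero.mpr hn.ne'
  have h1 : Matrix.vecMul (1 : Fin n → ℝ) (Matrix.diagonal ρ * Φ) = Φᵀ.mulVec ρ := by
    ext j
    simp [Matrix.vecMul, Matrix.mulVec, dotProduct, Matrix.diagonal_mul,
      Matrix.transpose_apply, mul_comm]
  have h2 : Ψᵀ.mulVec (1 : Fin m → ℝ) = Matrix.vecMul (1 : Fin m → ℝ) Ψ := by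
    ext j
    simp [Matrix.mulVec, Matrix.vecMul, dotProduct, Matrix.transpose_apply]
  have h3 : ((1 - γ) * ((n : ℝ) / m₀)) • (Ψᵀ.mulVec (1 : Fin m → ℝ)) = Φᵀ.mulVec ρ := by
    rw [h2]
    have hs : ((1 - γ) * ((n : ℝ) / m₀)) = (n : ℝ) * ((1 - γ) * (1 / m₀)) := by ring
    rw [hs, mul_smul, hSR, h1, smul_smul]
    rw [mul_one_div, div_self hne, one_smul]
  have key : wstar = (Φᵀ * Φ)⁻¹.mulVec (Φᵀ.mulVec ρ) := by
    rw [hwstar, ← Matrix.mulVec_smul, h3]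
  have hnorm : (Φᵀ * Φ).mulVec wstar = Φᵀ.mulVec ρ := by
    rw [key, Matrix.mulVec_mulVec, Matrix.mul_nonsing_inv _ hinv, Matrix.one_mulVec]
  refine ⟨key, fun w => ?_⟩
  have hdp : ∀ (v : Fin F → ℝ) (i : Fin n), v ⬝ᵥ (fun j => Φ i j) = Φ.mulVec v i := by
    intro v i
    simp [Matrix.mulVec, dotProduct, mul_comm]
  have horth : Φᵀ.mulVec (Φ.mulVec wstar - ρ) = 0 := by
    rw [Matrix.mulVec_sub, Matrix.mulVec_mulVec, hnorm, sub_self]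
  have hcross : ∑ i, (Φ.mulVec wstar i - ρ i) * (Φ.mulVec (w - wstar) i) = 0 := by
    have : (Φ.mulVec wstar - ρ) ⬝ᵥ (Φ.mulVec (w - wstar)) = 0 := by
      rw [Matrix.dotProduct_mulVec, ← Matrix.mulVec_transpose, horth, zero_dotProduct]
    simpa [dotProduct] using this
  have hw : ∀ i, w ⬝ᵥ (fun j => Φ i j) - ρ i
      = (Φ.mulVec wstar i - ρ i) + Φ.mulVec (w - wstar) i := by
    intro i
    rw [hdp]
    have : Φ.mulVec (w - wstar) i = Φ.mulVec w i - Φ.mulVec wstar i := by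
      rw [Matrix.mulVec_sub]; rfl
    rw [this]; ring
  calc ∑ i, (wstar ⬝ᵥ (fun j => Φ i j) - ρ i) ^ 2
      = ∑ i, (Φ.mulVec wstar i - ρ i) ^ 2 := by
        refine Finset.sum_congr rfl fun i _ => by rw [hdp]
    _ ≤ ∑ i, ((Φ.mulVec wstar i - ρ i) + Φ.mulVec (w - wstar) i) ^ 2 := by
        have expand : ∑ i, ((Φ.mulVec wstar i - ρ i) + Φ.mulVec (w - wstar) i) ^ 2
            = ∑ i, (Φ.mulVec wstar i - ρ i) ^ 2
              + 2 * ∑ i, (Φ.mulVec wstar i - ρ i) * (Φ.mulVec (w - wstar) i)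
              + ∑ i, (Φ.mulVec (w - wstar) i) ^ 2 := by
          rw [Finset.mul_sum, ← Finset.sum_add_distrib, ← Finset.sum_add_distrib]
          refine Finset.sum_congr rfl fun i _ => by ring
        rw [expand, hcross]
        have : 0 ≤ ∑ i, (Φ.mulVec (w - wstar) i) ^ 2 :=
          Finset.sum_nonneg fun i _ => sq_nonneg _
        linarith
    _ = ∑ i, (w ⬝ᵥ (fun j => Φ i j) - ρ i) ^ 2 := by
        refine Finset.sum_congr rfl fun i _ => by rw [hw]
end

section
/- If the true density ratio vector ρ ∈ ℝⁿ lies in the column span of Φ, i.e. ρ = Φv for some v, and the SR-exactness condition (1−γ)·(1/|D₀|)·Ψᵀ𝟏 = (1/|D|)·Φᵀρ holds, then the SR-DICE ratios Φw* with w* = (1−γ)·(|D|/|D₀|)·(ΦᵀΦ)⁻¹Ψᵀ𝟏 recover ρ exactly: Φw* = ρ. -/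
open Matrix

/-- If the density-ratio vector `ρ` lies in the column span of `Φ` and the
SR-exactness condition `(1−γ)·(1/|D₀|)·Ψᵀ𝟏 = (1/|D|)·Φᵀρ` holds, then the SR-DICE
ratios `Φw*` recover `ρ` exactly. -/
theorem stmt_16 {n m F : ℕ}
    (Φ : Matrix (Fin n) (Fin F) ℝ) (Ψ : Matrix (Fin m) (Fin F) ℝ)
    (ρ : Fin n → ℝ) (hn : 0 < n) (m₀ : ℝ) (hm₀ : 0 < m₀)
    (γ : ℝ) (hγ0 : 0 ≤ γ) (hγ1 : γ < 1)
    (hinv : IsUnit (Φᵀ * Φ).det)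
    (hspan : ∃ v : Fin F → ℝ, ρ = Φ.mulVec v)
    (hSR : ((1 - γ) * (1 / m₀)) • Ψᵀ.mulVec (1 : Fin m → ℝ)
      = (1 / (n : ℝ)) • Φᵀ.mulVec ρ)
    (wstar : Fin F → ℝ)
    (hwstar : wstar = ((1 - γ) * ((n : ℝ) / m₀)) •
      (Φᵀ * Φ)⁻¹.mulVec (Ψᵀ.mulVec (1 : Fin m → ℝ))) :
    Φ.mulVec wstar = ρ := by
  obtain ⟨v, hv⟩ := hspan
  have hn' : (n : ℝ) ≠ 0 := Nat.cast_ne_zero.mpr hn.ne'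
  have hw : wstar = v := by
    have h1 : wstar = (n : ℝ) • (Φᵀ * Φ)⁻¹.mulVec
        (((1 - γ) * (1 / m₀)) • Ψᵀ.mulVec (1 : Fin m → ℝ)) := by
      rw [hwstar, mulVec_smul, smul_smul]
      ring_nf
    rw [h1, hSR, mulVec_smul, smul_smul, mul_one_div,
      div_self hn', one_smul, hv, mulVec_mulVec, mulVec_mulVec, Matrix.mul_assoc, Matrix.nonsing_inv_mul _ hinv, one_mulVec]
  rw [hw, hv]
end
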